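/- Let Z be a block matrix over a field of the form Z = [[I_r, 0, 0, 0, 0], [U_1, W_11, W_12, W_13, 0], [0, U_2, W_21, W_22, 0], [0, 0, U_3, W_31, I_r], [0, 0, 0, U_4, 0]], where U_1, U_3 are r×r upper triangular with unit diagonal, U_2 and U_4 are square upper triangular with unit diagonal, and the W blocks have compatible dimensions. Let C = [[W_11, W_12],[U_2, W_21]] be the critical submatrix. Then |det Z| = |det C|, i.e., det Z = ± det C. -/

import Mathlib

open Matrix

/-- The Edmonds matrix `Z` with block structure
`[[I, 0, 0, 0, 0], [U₁, W₁₁, W₁₂, W₁₃, 0], [0, U₂, W₂₁, W₂₂, 0],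
[0, 0, U₃, W₃₁, I], [0, 0, 0, U₄, 0]]`.
Row blocks have sizes `r, r, k, r, m`; column blocks have sizes `r, k, r, m, r`. -/
def edmondsMat {K : Type*} [Field K] {r k m : ℕ}
    (U1 U3 W12 : Matrix (Fin r) (Fin r) K)
    (U2 : Matrix (Fin k) (Fin k) K) (U4 : Matrix (Fin m) (Fin m) K)
    (W11 : Matrix (Fin r) (Fin k) K)
    (W13 W31 : Matrix (Fin r) (Fin m) K)
    (W21 : Matrix (Fin k) (Fin r) K) (W22 : Matrix (Fin k) (Fin m) K) :
    Matrix (Fin r ⊕ Fin r ⊕ Fin k ⊕ Fin r ⊕ Fin m)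
      (Fin r ⊕ Fin k ⊕ Fin r ⊕ Fin m ⊕ Fin r) K :=
  Matrix.of fun i j =>
    match i, j with
    | Sum.inl i1, Sum.inl j1 => if i1 = j1 then (1 : K) else 0
    | Sum.inl _, _ => 0
    | Sum.inr (Sum.inl i2), Sum.inl j1 => U1 i2 j1
    | Sum.inr (Sum.inl i2), Sum.inr (Sum.inl j2) => W11 i2 j2
    | Sum.inr (Sum.inl i2), Sum.inr (Sum.inr (Sum.inl j3)) => W12 i2 j3
    | Sum.inr (Sum.inl i2), Sum.inr (Sum.inr (Sum.inr (Sum.inl j4))) => W13 i2 j4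
    | Sum.inr (Sum.inl _), Sum.inr (Sum.inr (Sum.inr (Sum.inr _))) => 0
    | Sum.inr (Sum.inr (Sum.inl i3)), Sum.inr (Sum.inl j2) => U2 i3 j2
    | Sum.inr (Sum.inr (Sum.inl i3)), Sum.inr (Sum.inr (Sum.inl j3)) => W21 i3 j3
    | Sum.inr (Sum.inr (Sum.inl i3)), Sum.inr (Sum.inr (Sum.inr (Sum.inl j4))) => W22 i3 j4
    | Sum.inr (Sum.inr (Sum.inl _)), _ => 0
    | Sum.inr (Sum.inr (Sum.inr (Sum.inl i4))), Sum.inr (Sum.inr (Sum.inl j3)) => U3 i4 j3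
    | Sum.inr (Sum.inr (Sum.inr (Sum.inl i4))), Sum.inr (Sum.inr (Sum.inr (Sum.inl j4))) => W31 i4 j4
    | Sum.inr (Sum.inr (Sum.inr (Sum.inl i4))), Sum.inr (Sum.inr (Sum.inr (Sum.inr j5))) =>
        if i4 = j5 then (1 : K) else 0
    | Sum.inr (Sum.inr (Sum.inr (Sum.inl _))), _ => 0
    | Sum.inr (Sum.inr (Sum.inr (Sum.inr i5))), Sum.inr (Sum.inr (Sum.inr (Sum.inl j4))) => U4 i5 j4
    | Sum.inr (Sum.inr (Sum.inr (Sum.inr _))), _ => 0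

/-- The critical matrix `C = [[W₁₁, W₁₂], [U₂, W₂₁]]`, made square by
reindexing the rows along `Fin k ⊕ Fin r ≃ Fin r ⊕ Fin k`. -/
def criticalMat {K : Type*} [Field K] {r k : ℕ}
    (W12 : Matrix (Fin r) (Fin r) K) (U2 : Matrix (Fin k) (Fin k) K)
    (W11 : Matrix (Fin r) (Fin k) K) (W21 : Matrix (Fin k) (Fin r) K) :
    Matrix (Fin k ⊕ Fin r) (Fin k ⊕ Fin r) K :=
  (Matrix.fromBlocks W11 W12 U2 W21).submatrix (Equiv.sumComm (Fin k) (Fin r)) id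

section Aux

variable {K : Type*} [Field K] {r k m : ℕ}

theorem stmt2_aux_detN
    (U1 U3 W12 : Matrix (Fin r) (Fin r) K)
    (U2 : Matrix (Fin k) (Fin k) K) (U4 : Matrix (Fin m) (Fin m) K)
    (W11 : Matrix (Fin r) (Fin k) K)
    (W13 W31 : Matrix (Fin r) (Fin m) K)
    (W21 : Matrix (Fin k) (Fin r) K) (W22 : Matrix (Fin k) (Fin m) K)
    (hU4 : ∀ i j : Fin m, j < i → U4 i j = 0) (hU4d : ∀ i, U4 i i = 1) :
    (Matrix.fromBlocks
      (Matrix.fromBlocks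
        (Matrix.fromBlocks 1 0 (Matrix.fromRows 0 U1) (criticalMat W12 U2 W11 W21))
        0
        (Matrix.fromCols (0 : Matrix (Fin r) (Fin r) K) (Matrix.fromCols 0 U3))
        (1 : Matrix (Fin r) (Fin r) K))
      (Matrix.fromRows (Matrix.fromRows 0 (Matrix.fromRows W22 W13)) W31)
      0 U4).det = (criticalMat W12 U2 W11 W21).det := by
  have hU4det : U4.det = 1 := by
    rw [Matrix.det_of_upperTriangular (M := U4) (fun i j h => hU4 i j h)]
    exact Finset.prod_eq_one fun i _ => hU4d i
  rw [Matrix.det_fromBlocks_zero₂₁, Matrix.det_fromBlocks_zero₁₂,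
    Matrix.det_fromBlocks_zero₁₂, Matrix.det_one, hU4det]
  ring

/-- Row reindexing equiv for the Edmonds matrix. -/
def edmondsRowEquiv (r k m : ℕ) :
    (((Fin r ⊕ (Fin k ⊕ Fin r)) ⊕ Fin r) ⊕ Fin m) ≃
      (Fin r ⊕ Fin r ⊕ Fin k ⊕ Fin r ⊕ Fin m) where
  toFun x := match x with
    | Sum.inl (Sum.inl (Sum.inl x)) => Sum.inl x
    | Sum.inl (Sum.inl (Sum.inr (Sum.inl x))) => Sum.inr (Sum.inr (Sum.inl x))
    | Sum.inl (Sum.inl (Sum.inr (Sum.inr x))) => Sum.inr (Sum.inl x)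
    | Sum.inl (Sum.inr x) => Sum.inr (Sum.inr (Sum.inr (Sum.inl x)))
    | Sum.inr x => Sum.inr (Sum.inr (Sum.inr (Sum.inr x)))
  invFun x := match x with
    | Sum.inl x => Sum.inl (Sum.inl (Sum.inl x))
    | Sum.inr (Sum.inl x) => Sum.inl (Sum.inl (Sum.inr (Sum.inr x)))
    | Sum.inr (Sum.inr (Sum.inl x)) => Sum.inl (Sum.inl (Sum.inr (Sum.inl x)))
    | Sum.inr (Sum.inr (Sum.inr (Sum.inl x))) => Sum.inl (Sum.inr x)
    | Sum.inr (Sum.inr (Sum.inr (Sum.inr x))) => Sum.inr x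
  left_inv x := by rcases x with (((x | (x | x)) | x) | x) <;> rfl
  right_inv x := by rcases x with (x | (x | (x | (x | x)))) <;> rfl

/-- Column reindexing equiv for the Edmonds matrix. -/
def edmondsColEquiv (r k m : ℕ) :
    (((Fin r ⊕ (Fin k ⊕ Fin r)) ⊕ Fin r) ⊕ Fin m) ≃
      (Fin r ⊕ Fin k ⊕ Fin r ⊕ Fin m ⊕ Fin r) where
  toFun x := match x with
    | Sum.inl (Sum.inl (Sum.inl x)) => Sum.inl x
    | Sum.inl (Sum.inl (Sum.inr (Sum.inl x))) => Sum.inr (Sum.inl x)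
    | Sum.inl (Sum.inl (Sum.inr (Sum.inr x))) => Sum.inr (Sum.inr (Sum.inl x))
    | Sum.inl (Sum.inr x) => Sum.inr (Sum.inr (Sum.inr (Sum.inr x)))
    | Sum.inr x => Sum.inr (Sum.inr (Sum.inr (Sum.inl x)))
  invFun x := match x with
    | Sum.inl x => Sum.inl (Sum.inl (Sum.inl x))
    | Sum.inr (Sum.inl x) => Sum.inl (Sum.inl (Sum.inr (Sum.inl x)))
    | Sum.inr (Sum.inr (Sum.inl x)) => Sum.inl (Sum.inl (Sum.inr (Sum.inr x)))
    | Sum.inr (Sum.inr (Sum.inr (Sum.inl x))) => Sum.inr x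
    | Sum.inr (Sum.inr (Sum.inr (Sum.inr x))) => Sum.inl (Sum.inr x)
  left_inv x := by rcases x with (((x | (x | x)) | x) | x) <;> rfl
  right_inv x := by rcases x with (x | (x | (x | (x | x)))) <;> rfl

theorem stmt2_aux_sub
    (U1 U3 W12 : Matrix (Fin r) (Fin r) K)
    (U2 : Matrix (Fin k) (Fin k) K) (U4 : Matrix (Fin m) (Fin m) K)
    (W11 : Matrix (Fin r) (Fin k) K)
    (W13 W31 : Matrix (Fin r) (Fin m) K)
    (W21 : Matrix (Fin k) (Fin r) K) (W22 : Matrix (Fin k) (Fin m) K) :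
    (edmondsMat U1 U3 W12 U2 U4 W11 W13 W31 W21 W22).submatrix
        (edmondsRowEquiv r k m) (edmondsColEquiv r k m) =
      Matrix.fromBlocks
        (Matrix.fromBlocks
          (Matrix.fromBlocks 1 0 (Matrix.fromRows 0 U1) (criticalMat W12 U2 W11 W21))
          0
          (Matrix.fromCols (0 : Matrix (Fin r) (Fin r) K) (Matrix.fromCols 0 U3))
          (1 : Matrix (Fin r) (Fin r) K))
        (Matrix.fromRows (Matrix.fromRows 0 (Matrix.fromRows W22 W13)) W31)
        0 U4 := by
  ext i j
  rcases i with (((i | (i | i)) | i) | i) <;> rcases j with (((j | (j | j)) | j) | j) <;>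
    simp [edmondsMat, edmondsRowEquiv, edmondsColEquiv, criticalMat,
      Matrix.fromBlocks, Matrix.fromCols, Matrix.one_apply,
      Matrix.submatrix, eq_comm]

end Aux

/-- The determinant of the Edmonds matrix equals, up to sign, the
determinant of its critical matrix: `det Z = ± det C`. -/
theorem stmt2 {K : Type*} [Field K] (r k m : ℕ)
    (U1 U3 W12 : Matrix (Fin r) (Fin r) K)
    (U2 : Matrix (Fin k) (Fin k) K) (U4 : Matrix (Fin m) (Fin m) K)
    (W11 : Matrix (Fin r) (Fin k) K)
    (W13 W31 : Matrix (Fin r) (Fin m) K)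
    (W21 : Matrix (Fin k) (Fin r) K) (W22 : Matrix (Fin k) (Fin m) K)
    (hU1 : ∀ i j : Fin r, j < i → U1 i j = 0) (hU1d : ∀ i, U1 i i = 1)
    (hU2 : ∀ i j : Fin k, j < i → U2 i j = 0) (hU2d : ∀ i, U2 i i = 1)
    (hU3 : ∀ i j : Fin r, j < i → U3 i j = 0) (hU3d : ∀ i, U3 i i = 1)
    (hU4 : ∀ i j : Fin m, j < i → U4 i j = 0) (hU4d : ∀ i, U4 i i = 1)
    (e : (Fin r ⊕ Fin k ⊕ Fin r ⊕ Fin m ⊕ Fin r) ≃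
      (Fin r ⊕ Fin r ⊕ Fin k ⊕ Fin r ⊕ Fin m)) :
    ((edmondsMat U1 U3 W12 U2 U4 W11 W13 W31 W21 W22).submatrix e id).det
        = (criticalMat W12 U2 W11 W21).det ∨
      ((edmondsMat U1 U3 W12 U2 U4 W11 W13 W31 W21 W22).submatrix e id).det
        = -(criticalMat W12 U2 W11 W21).det := by
  have hsub := stmt2_aux_sub U1 U3 W12 U2 U4 W11 W13 W31 W21 W22
  have hNdet := stmt2_aux_detN U1 U3 W12 U2 U4 W11 W13 W31 W21 W22 hU4 hU4d
  set Z := edmondsMat U1 U3 W12 U2 U4 W11 W13 W31 W21 W22 with hZ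
  set e₀ := edmondsRowEquiv r k m with he₀
  set g₀ := edmondsColEquiv r k m with hg₀
  set π : Equiv.Perm (Fin r ⊕ Fin k ⊕ Fin r ⊕ Fin m ⊕ Fin r) :=
    (e.trans e₀.symm).trans g₀ with hπ
  have key : Z.submatrix e id =
      ((Z.submatrix e₀ g₀).submatrix g₀.symm g₀.symm).submatrix π id := by
    ext i j
    simp [hπ, Matrix.submatrix_apply]
  rw [key, Matrix.det_permute, hsub, Matrix.det_submatrix_equiv_self, hNdet]
  rcases Int.units_eq_one_or (Equiv.Perm.sign π) with h | h <;> rw [h] <;> simp
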